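/- Every basic open set W(r,v,i) of the Λ-duplicate D is compact; consequently D is a locally compact space. -/

import Mathlib

/-- An element of Kurepa's tree `Λ`: an injective function `t : α → ω` with countable
ordinal domain `α` and coinfinite range.  The function is represented as a total function
on ordinals which takes the junk value `0` outside of the domain. -/
structure Lambda : Type 1 where
  toFun : Ordinal.{0} → ℕ
  dom : Ordinal.{0}
  countable : dom.card ≤ Cardinal.aleph0
  inj : ∀ β γ, β < dom → γ < dom → toFun β = toFun γ → β = γ
  coinfinite : {n : ℕ | ∀ β, β < dom → toFun β ≠ n}.Infinite
  junk : ∀ β, ¬ β < dom → toFun β = 0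

/-- The tree order on `Λ`: `s ≼ t` iff `t` extends `s`. -/
def Lambda.le (s t : Lambda) : Prop :=
  s.dom ≤ t.dom ∧ ∀ β, β < s.dom → s.toFun β = t.toFun β

/-- The strict tree order on `Λ`. -/
def Lambda.lt (s t : Lambda) : Prop := Lambda.le s t ∧ s ≠ t

/-- `r ≺ s` for `r ∈ Λ ∪ {0}` (`none` plays the role of the extra least element `0`). -/
def precLt : Option Lambda → Lambda → Prop
  | none, _ => True
  | some r, s => Lambda.lt r s

/-- The interval `(r, t] = {s ∈ Λ : r ≺ s ≼ t}`, with `r ∈ Λ ∪ {0}`. -/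
def lamIoc (r : Option Lambda) (t : Lambda) : Set Lambda :=
  {s | precLt r s ∧ Lambda.le s t}

/-- The position of the minimum of `t` on the ordinal interval `[δ, β)`. -/
noncomputable def minPos (t : Ordinal.{0} → ℕ) (δ β : Ordinal.{0}) : Ordinal.{0} :=
  sInf {ξ | δ ≤ ξ ∧ ξ < β ∧ ∀ η, δ ≤ η → η < β → t ξ ≤ t η}

lemma minPos_lt (t : Ordinal.{0} → ℕ) {δ β : Ordinal.{0}} (h : δ < β) : minPos t δ β < β := by
  have hne : {ξ : Ordinal.{0} | δ ≤ ξ ∧ ξ < β ∧ ∀ η, δ ≤ η → η < β → t ξ ≤ t η}.Nonempty := by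
    have h1 : {n : ℕ | ∃ ξ : Ordinal.{0}, δ ≤ ξ ∧ ξ < β ∧ t ξ = n}.Nonempty :=
      ⟨t δ, δ, le_refl _, h, rfl⟩
    obtain ⟨ξ, hξ1, hξ2, hξ3⟩ := Nat.sInf_mem h1
    refine ⟨ξ, hξ1, hξ2, fun η h1' h2' => ?_⟩
    rw [hξ3]
    exact Nat.sInf_le ⟨η, h1', h2', rfl⟩
  obtain ⟨ξ, hξ⟩ := hne
  calc minPos t δ β ≤ ξ := csInf_le (OrderBot.bddBelow _) hξ
    _ < β := hξ.2.1

/-- The sequence `τ` computed from the starting ordinal `β₀` downwards: `τ` is obtained by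
repeatedly passing from `β` to the position of the minimum of `t` on `[δ, β)`, stopping upon
reaching `δ`.  The resulting finite sequence `(β_k, …, β_1)` is recorded as a list in the
order `[β_k, …, β_1]` (so concatenation of the lists corresponds to `⌢`). -/
noncomputable def tauFrom (δ : Ordinal.{0}) (t : Ordinal.{0} → ℕ) : Ordinal.{0} → List Ordinal.{0} :=
  WellFounded.fix wellFounded_lt
    (fun β IH => if h : δ < β then IH (minPos t δ β) (minPos_lt t h) ++ [minPos t δ β] else [])

/-- The finite sequence `τ(s,t)` of ordinals, for `s ≼ t` in `Λ`. -/
noncomputable def tau (s t : Lambda) : List Ordinal.{0} :=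
  tauFrom s.dom t.toFun t.dom

/-- `ℓ(s,t)`, the length of `τ(s,t)`. -/
noncomputable def ell (s t : Lambda) : ℕ := (tau s t).length

/-- The underlying set of the `Λ`-duplicate: `D = Λ × {1, -1}`. -/
abbrev Dup : Type 1 := Lambda × ℤˣ

/-- The basic open sets `W(r,t,i)` of the `Λ`-duplicate. -/
noncomputable def Wset (r : Option Lambda) (t : Lambda) (i : ℤˣ) : Set Dup :=
  {q | q.1 ∈ lamIoc r t ∧ q.2 = (-1) ^ ell q.1 t * i}

/-- The collection of all basic open sets `W(r,t,i)` with `r ≺ t`. -/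
noncomputable def WBasis : Set (Set Dup) :=
  {S | ∃ (r : Option Lambda) (t : Lambda) (i : ℤˣ), precLt r t ∧ S = Wset r t i}

/-- The topology of the `Λ`-duplicate, generated by the basic sets `W(r,t,i)`. -/
noncomputable instance : TopologicalSpace Dup := TopologicalSpace.generateFrom WBasis



/-! ### Auxiliary lemmas -/

section Aux

open Set

lemma Lambda.ext' {s t : Lambda} (h1 : s.toFun = t.toFun) (h2 : s.dom = t.dom) : s = t := by
  cases s; cases t
  cases h1; cases h2
  rfl

lemma Lambda.le_refl (s : Lambda) : s.le s := ⟨le_rfl, fun _ _ => rfl⟩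

lemma Lambda.le_trans {s t u : Lambda} (h1 : s.le t) (h2 : t.le u) : s.le u :=
  ⟨h1.1.trans h2.1, fun β hβ => (h1.2 β hβ).trans (h2.2 β (hβ.trans_le h1.1))⟩

lemma Lambda.eq_of_le_dom {s t : Lambda} (h : s.le t) (hd : t.dom ≤ s.dom) : s = t := by
  refine Lambda.ext' (funext fun β => ?_) (le_antisymm h.1 hd)
  by_cases hβ : β < s.dom
  · exact h.2 β hβ
  · rw [s.junk β hβ, t.junk β (fun hc => hβ (hc.trans_le hd))]

lemma Lambda.lt_dom {s t : Lambda} (h : Lambda.lt s t) : s.dom < t.dom := by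
  rcases lt_or_ge s.dom t.dom with h' | h'
  · exact h'
  · exact absurd (Lambda.eq_of_le_dom h.1 h') h.2

/-- The restriction of `v ∈ Λ` to an initial segment `δ ≤ dom v`. -/
noncomputable def Lambda.restrict (v : Lambda) (δ : Ordinal.{0}) (h : δ ≤ v.dom) : Lambda where
  toFun := fun β => if β < δ then v.toFun β else 0
  dom := δ
  countable := (Ordinal.card_le_card h).trans v.countable
  inj := fun β γ hβ hγ e => v.inj β γ (hβ.trans_le h) (hγ.trans_le h) (by
    have e' : (if β < δ then v.toFun β else 0) = (if γ < δ then v.toFun γ else 0) := e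
    rwa [if_pos hβ, if_pos hγ] at e')
  coinfinite := v.coinfinite.mono (fun n hn => by
    intro β hβ
    show (if β < δ then v.toFun β else 0) ≠ n
    rw [if_pos hβ]
    exact hn β (hβ.trans_le h))
  junk := fun β hβ => if_neg hβ

@[simp] lemma Lambda.restrict_dom (v : Lambda) (δ : Ordinal.{0}) (h : δ ≤ v.dom) :
    (v.restrict δ h).dom = δ := rfl

lemma Lambda.restrict_toFun (v : Lambda) (δ : Ordinal.{0}) (h : δ ≤ v.dom) {β : Ordinal.{0}}
    (hβ : β < δ) : (v.restrict δ h).toFun β = v.toFun β := if_pos hβ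

lemma Lambda.restrict_le (v : Lambda) (δ : Ordinal.{0}) (h : δ ≤ v.dom) :
    (v.restrict δ h).le v := ⟨h, fun β hβ => if_pos hβ⟩

lemma Lambda.eq_restrict {s v : Lambda} (h : s.le v) : s = v.restrict s.dom h.1 := by
  refine Lambda.ext' (funext fun β => ?_) rfl
  by_cases hβ : β < s.dom
  · rw [Lambda.restrict_toFun v s.dom h.1 hβ]; exact h.2 β hβ
  · rw [s.junk β hβ]; exact ((v.restrict s.dom h.1).junk β hβ).symm

lemma Lambda.restrict_le_restrict (v : Lambda) {γ δ : Ordinal.{0}} (h1 : γ ≤ δ)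
    (h2 : δ ≤ v.dom) : (v.restrict γ (h1.trans h2)).le (v.restrict δ h2) := by
  refine ⟨h1, fun β hβ => ?_⟩
  rw [Lambda.restrict_toFun v γ _ hβ, Lambda.restrict_toFun v δ _ (hβ.trans_le h1)]

/-! ### Properties of `minPos` and `tauFrom` -/

lemma minPos_set_nonempty (t : Ordinal.{0} → ℕ) {δ β : Ordinal.{0}} (h : δ < β) :
    {ξ : Ordinal.{0} | δ ≤ ξ ∧ ξ < β ∧ ∀ η, δ ≤ η → η < β → t ξ ≤ t η}.Nonempty := by
  have h1 : {n : ℕ | ∃ ξ : Ordinal.{0}, δ ≤ ξ ∧ ξ < β ∧ t ξ = n}.Nonempty :=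
    ⟨t δ, δ, le_refl _, h, rfl⟩
  obtain ⟨ξ, hξ1, hξ2, hξ3⟩ := Nat.sInf_mem h1
  refine ⟨ξ, hξ1, hξ2, fun η h1' h2' => ?_⟩
  rw [hξ3]
  exact Nat.sInf_le ⟨η, h1', h2', rfl⟩

lemma minPos_mem (t : Ordinal.{0} → ℕ) {δ β : Ordinal.{0}} (h : δ < β) :
    δ ≤ minPos t δ β ∧ minPos t δ β < β ∧ ∀ η, δ ≤ η → η < β → t (minPos t δ β) ≤ t η :=
  csInf_mem (minPos_set_nonempty t h)

lemma tauFrom_def (δ : Ordinal.{0}) (t : Ordinal.{0} → ℕ) (β : Ordinal.{0}) :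
    tauFrom δ t β =
      if h : δ < β then tauFrom δ t (minPos t δ β) ++ [minPos t δ β] else [] := by
  unfold tauFrom
  rw [WellFounded.fix_eq]

lemma minPos_congr {t1 t2 : Ordinal.{0} → ℕ} {δ β : Ordinal.{0}}
    (h : ∀ ξ, δ ≤ ξ → ξ < β → t1 ξ = t2 ξ) : minPos t1 δ β = minPos t2 δ β := by
  unfold minPos
  congr 1
  ext ξ
  constructor
  · rintro ⟨h1, h2, h3⟩
    refine ⟨h1, h2, fun η hη1 hη2 => ?_⟩
    rw [← h ξ h1 h2, ← h η hη1 hη2]; exact h3 η hη1 hη2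
  · rintro ⟨h1, h2, h3⟩
    refine ⟨h1, h2, fun η hη1 hη2 => ?_⟩
    rw [h ξ h1 h2, h η hη1 hη2]; exact h3 η hη1 hη2

lemma tauFrom_congr {t1 t2 : Ordinal.{0} → ℕ} {δ : Ordinal.{0}} (β : Ordinal.{0})
    (h : ∀ ξ, δ ≤ ξ → ξ < β → t1 ξ = t2 ξ) : tauFrom δ t1 β = tauFrom δ t2 β := by
  induction β using Ordinal.induction with
  | h β IH =>
    rw [tauFrom_def δ t1 β, tauFrom_def δ t2 β]
    by_cases hδβ : δ < β
    · rw [dif_pos hδβ, dif_pos hδβ]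
      have hm : minPos t1 δ β = minPos t2 δ β := minPos_congr h
      have hmem := minPos_mem t1 hδβ
      rw [← hm]
      rw [IH (minPos t1 δ β) hmem.2.1
        (fun ξ h1 h2 => h ξ h1 (h2.trans hmem.2.1))]
    · rw [dif_neg hδβ, dif_neg hδβ]

lemma minPos_shift {t : Ordinal.{0} → ℕ} {δu δs β : Ordinal.{0}} (hus : δu ≤ δs) (hsβ : δs < β)
    (H : ∀ ξ, δu ≤ ξ → ξ < δs → t δs < t ξ) : minPos t δu β = minPos t δs β := by
  unfold minPos
  congr 1
  ext ξ
  constructor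
  · rintro ⟨h1, h2, h3⟩
    have hle : t ξ ≤ t δs := h3 δs hus hsβ
    have hξs : δs ≤ ξ := by
      by_contra hc
      push_neg at hc
      exact absurd hle (not_le.2 (H ξ h1 hc))
    exact ⟨hξs, h2, fun η h1' h2' => h3 η (hus.trans h1') h2'⟩
  · rintro ⟨h1, h2, h3⟩
    refine ⟨hus.trans h1, h2, fun η hη1 hη2 => ?_⟩
    by_cases hc : δs ≤ η
    · exact h3 η hc hη2
    · push_neg at hc
      exact le_of_lt (lt_of_le_of_lt (h3 δs le_rfl hsβ) (H η hη1 hc))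

/-- Concatenation property of `τ`: if all values of `t` on `[δu, δs)` exceed `t δs`, then
the `τ`-path from any `β ≥ δs` down to `δu` passes through `δs`. -/
lemma tauFrom_append {t : Ordinal.{0} → ℕ} {δu δs : Ordinal.{0}} (hus : δu ≤ δs)
    (H : ∀ ξ, δu ≤ ξ → ξ < δs → t δs < t ξ) (β : Ordinal.{0}) (hβ : δs ≤ β) :
    tauFrom δu t β = tauFrom δu t δs ++ tauFrom δs t β := by
  induction β using Ordinal.induction with
  | h β IH =>
    rcases eq_or_lt_of_le hβ with rfl | hlt
    · rw [tauFrom_def δs t δs, dif_neg (lt_irrefl δs), List.append_nil]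
    · have hm : minPos t δu β = minPos t δs β := minPos_shift hus hlt H
      have hmem := minPos_mem t hlt
      rw [tauFrom_def δu t β, dif_pos (lt_of_le_of_lt hus hlt),
        tauFrom_def δs t β, dif_pos hlt, hm,
        IH (minPos t δs β) hmem.2.1 hmem.1, List.append_assoc]

lemma ell_self (t : Lambda) : ell t t = 0 := by
  unfold ell tau
  rw [tauFrom_def, dif_neg (lt_irrefl _)]
  rfl

/-- Values of `v` on a tail of `[0, δs)` exceed any given bound `N`. -/
lemma exists_tail_bound (v : Lambda) {δs : Ordinal.{0}} (h0 : 0 < δs) (hδ : δs ≤ v.dom) (N : ℕ) :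
    ∃ δ₀, δ₀ < δs ∧ ∀ ξ, δ₀ < ξ → ξ < δs → N < v.toFun ξ := by
  classical
  set bad := {ξ : Ordinal.{0} | ξ < δs ∧ v.toFun ξ ≤ N} with hbad
  have hfin : bad.Finite := by
    have himg : (v.toFun '' bad).Finite := (Set.finite_Iic N).subset (by
      rintro _ ⟨ξ, hξ, rfl⟩; exact hξ.2)
    exact Set.Finite.of_finite_image himg
      (fun a ha b hb e => v.inj a b (ha.1.trans_le hδ) (hb.1.trans_le hδ) e)
  have hSfin : (insert (0 : Ordinal.{0}) bad).Finite := hfin.insert 0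
  have hSne : (insert (0 : Ordinal.{0}) bad).Nonempty := ⟨0, Set.mem_insert _ _⟩
  refine ⟨sSup (insert (0 : Ordinal.{0}) bad), ?_, ?_⟩
  · rcases Set.mem_insert_iff.1 (hSne.csSup_mem hSfin) with h | h
    · rw [h]; exact h0
    · exact h.1
  · intro ξ h1 h2
    by_contra hc
    push_neg at hc
    exact absurd (le_csSup hSfin.bddAbove (Set.mem_insert_of_mem _ ⟨h2, hc⟩)) (not_le.2 h1)

/-- Additivity of `ℓ` near a point: for `s ≼ v` and `s ≼ t`, on a tail of restrictions `u` of
`v` below `s` we have `ℓ(u,t) = ℓ(u,s) + ℓ(s,t)`. -/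
lemma ell_additive {v s t : Lambda} (hsv : s.le v) (hst : s.le t) (h0 : 0 < s.dom) :
    ∃ δ₀, δ₀ < s.dom ∧ ∀ γ, δ₀ < γ → γ ≤ s.dom → ∀ (hγv : γ ≤ v.dom),
      ell (v.restrict γ hγv) t = ell (v.restrict γ hγv) s + ell s t := by
  by_cases hdom : s.dom < t.dom
  · obtain ⟨δ₀, hδ₀, hbound⟩ := exists_tail_bound v h0 hsv.1 (t.toFun s.dom)
    refine ⟨δ₀, hδ₀, fun γ hγ1 hγ2 hγv => ?_⟩
    have H : ∀ ξ, γ ≤ ξ → ξ < s.dom → t.toFun s.dom < t.toFun ξ := by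
      intro ξ h1 h2
      have he : t.toFun ξ = v.toFun ξ := (hst.2 ξ h2).symm.trans (hsv.2 ξ h2)
      rw [he]
      exact hbound ξ (lt_of_lt_of_le hγ1 h1) h2
    have hA : tauFrom γ t.toFun t.dom = tauFrom γ t.toFun s.dom ++ tauFrom s.dom t.toFun t.dom :=
      tauFrom_append hγ2 H t.dom hst.1
    have hC : tauFrom γ t.toFun s.dom = tauFrom γ s.toFun s.dom :=
      tauFrom_congr s.dom (fun ξ _ h2 => (hst.2 ξ h2).symm)
    show (tauFrom γ t.toFun t.dom).length = (tauFrom γ s.toFun s.dom).length + ell s t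
    rw [hA, hC, List.length_append]
    rfl
  · have hts : s = t := Lambda.eq_of_le_dom hst (not_lt.1 hdom)
    subst hts
    refine ⟨0, h0, fun γ _ _ _ => ?_⟩
    rw [ell_self, Nat.add_zero]

/-- Key neighbourhood lemma: a basic set `w` containing the point of the duplicate determined by
the restriction of `v` to `δs` contains the points determined by all restrictions of `v` to a
tail below `δs`. -/
lemma key_nbhd {v : Lambda} {δs : Ordinal.{0}} (hδ : δs ≤ v.dom) (h0 : 0 < δs) (i : ℤˣ)
    {w : Set Dup} (hw : w ∈ WBasis)
    (hp : ((v.restrict δs hδ), (-1) ^ ell (v.restrict δs hδ) v * i) ∈ w) :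
    ∃ δ₀, δ₀ < δs ∧ ∀ γ, δ₀ < γ → γ ≤ δs → ∀ (hγv : γ ≤ v.dom),
      ((v.restrict γ hγv), (-1) ^ ell (v.restrict γ hγv) v * i) ∈ w := by
  obtain ⟨r', t', i', hprec, rfl⟩ := hw
  have hsv : (v.restrict δs hδ).le v := Lambda.restrict_le v δs hδ
  have hst : (v.restrict δs hδ).le t' := hp.1.2
  obtain ⟨δ₁, hδ₁, h1⟩ := ell_additive hsv hst h0
  obtain ⟨δ₂, hδ₂, h2⟩ := ell_additive hsv hsv h0
  have hrb : ∃ δr, δr < δs ∧ ∀ r₀, r' = some r₀ → r₀.dom ≤ δr := by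
    cases r' with
    | none => exact ⟨0, h0, fun r₀ h => by cases h⟩
    | some r₀ =>
      refine ⟨r₀.dom, ?_, fun r₁ h => by cases h; exact le_rfl⟩
      have := Lambda.lt_dom (hp.1.1 : Lambda.lt r₀ (v.restrict δs hδ))
      rwa [Lambda.restrict_dom] at this
  obtain ⟨δr, hδr, hr⟩ := hrb
  refine ⟨max (max δ₁ δ₂) δr, max_lt (max_lt hδ₁ hδ₂) hδr, fun γ hγ1 hγ2 hγv => ?_⟩
  have hγ1' : δ₁ < γ := lt_of_le_of_lt ((le_max_left δ₁ δ₂).trans (le_max_left _ δr)) hγ1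
  have hγ2' : δ₂ < γ := lt_of_le_of_lt ((le_max_right δ₁ δ₂).trans (le_max_left _ δr)) hγ1
  have hγr : δr < γ := lt_of_le_of_lt (le_max_right _ δr) hγ1
  have hus : (v.restrict γ hγv).le (v.restrict δs hδ) :=
    Lambda.restrict_le_restrict v hγ2 hδ
  constructor
  · refine ⟨?_, Lambda.le_trans hus hst⟩
    cases r' with
    | none => trivial
    | some r₀ =>
      have hr₀s : Lambda.lt r₀ (v.restrict δs hδ) := hp.1.1
      have hdom : r₀.dom < γ := lt_of_le_of_lt (hr r₀ rfl) hγr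
      refine ⟨⟨hdom.le, fun β hβ => ?_⟩, fun he => ?_⟩
      · rw [hr₀s.1.2 β hβ]
        exact (hus.2 β (hβ.trans hdom)).symm
      · exact absurd (congrArg Lambda.dom he) (ne_of_lt hdom)
  · show (-1 : ℤˣ) ^ ell (v.restrict γ hγv) v * i
      = (-1) ^ ell (v.restrict γ hγv) t' * i'
    have e1 := h1 γ hγ1' hγ2 hγv
    have e2 := h2 γ hγ2' hγ2 hγv
    have hp2 : (-1 : ℤˣ) ^ ell (v.restrict δs hδ) v * i
        = (-1) ^ ell (v.restrict δs hδ) t' * i' := hp.2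
    rw [e1, e2, pow_add, pow_add, mul_assoc, mul_assoc, hp2]

/-- Combine the neighbourhood data for finitely many basic sets. -/
lemma finite_combine {α : Type*} {f : Set α} (hf : f.Finite) {δs : Ordinal.{0}} (h0 : 0 < δs)
    (Q : α → Ordinal.{0} → Prop)
    (h : ∀ w ∈ f, ∃ δ₀, δ₀ < δs ∧ ∀ γ, δ₀ < γ → Q w γ) :
    ∃ δ', δ' < δs ∧ ∀ w ∈ f, ∀ γ, δ' < γ → Q w γ := by
  classical
  choose! g hg1 hg2 using h
  have hSfin : (insert (0 : Ordinal.{0}) (g '' f)).Finite := (hf.image g).insert 0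
  have hSne : (insert (0 : Ordinal.{0}) (g '' f)).Nonempty := ⟨0, Set.mem_insert _ _⟩
  refine ⟨sSup (insert (0 : Ordinal.{0}) (g '' f)), ?_, fun w hw γ hγ => ?_⟩
  · rcases Set.mem_insert_iff.1 (hSne.csSup_mem hSfin) with h' | h'
    · rw [h']; exact h0
    · obtain ⟨w, hw, he⟩ := h'
      rw [← he]
      exact hg1 w hw
  · refine hg2 w hw γ (lt_of_le_of_lt ?_ hγ)
    exact le_csSup hSfin.bddAbove (Set.mem_insert_of_mem _ ⟨w, hw, rfl⟩)

end Aux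


/-- Every basic open set `W(r,v,i)` of the `Λ`-duplicate `D` is compact; consequently `D`
is locally compact. -/
theorem Wset_compact_and_locallyCompact :
    (∀ (r : Option Lambda) (v : Lambda) (i : ℤˣ), precLt r v → IsCompact (Wset r v i)) ∧
    LocallyCompactSpace Dup := by
  classical
  have basis : TopologicalSpace.IsTopologicalBasis
      ((fun f => Set.sInter f) '' { f : Set (Set Dup) | f.Finite ∧ f ⊆ WBasis }) :=
    TopologicalSpace.isTopologicalBasis_of_subbasis rfl
  have hWopen : ∀ (r : Option Lambda) (t : Lambda) (i : ℤˣ), precLt r t →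
      IsOpen (Wset r t i) :=
    fun r t i h => TopologicalSpace.isOpen_generateFrom_of_mem ⟨r, t, i, h, rfl⟩
  have hcompact : ∀ (r : Option Lambda) (v : Lambda) (i : ℤˣ), precLt r v →
      IsCompact (Wset r v i) := by
    intro r v i hrv
    refine isCompact_of_finite_subcover fun {ι} U hUo hUc => ?_
    set P : Ordinal.{0} → Prop :=
      fun δ => ∃ F : Finset ι, {q | q ∈ Wset r v i ∧ q.1.dom ≤ δ} ⊆ ⋃ j ∈ F, U j with hPdef
    have main : ∀ δ, δ ≤ v.dom → P δ := by
      by_contra hB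
      push_neg at hB
      set B := {δ : Ordinal.{0} | δ ≤ v.dom ∧ ¬ P δ} with hBdef
      have hBne : B.Nonempty := by
        obtain ⟨δ, h1, h2⟩ := hB
        exact ⟨δ, h1, h2⟩
      have hδsB : sInf B ∈ B := csInf_mem hBne
      set δs := sInf B with hδs
      have hmin : ∀ δ, δ < δs → δ ≤ v.dom → P δ := by
        intro δ h1 h2
        by_contra hc
        exact absurd (csInf_le (OrderBot.bddBelow _) (show δ ∈ B from ⟨h2, hc⟩)) (not_le.2 h1)
      have hδv : δs ≤ v.dom := hδsB.1
      have hrbound : ∀ r₀, r = some r₀ → r₀.dom < δs := by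
        intro r₀ hr₀
        by_contra hc
        push_neg at hc
        apply hδsB.2
        refine ⟨∅, fun q hq => ?_⟩
        exfalso
        have h1 : Lambda.lt r₀ q.1 := by
          have := hq.1.1.1
          rw [hr₀] at this
          exact this
        exact absurd ((Lambda.lt_dom h1).trans_le (hq.2.trans hc)) (lt_irrefl _)
      set p1 := v.restrict δs hδv with hp1
      set p : Dup := (p1, (-1) ^ ell p1 v * i) with hp
      have hpW : p ∈ Wset r v i := by
        refine ⟨⟨?_, Lambda.restrict_le v δs hδv⟩, rfl⟩
        cases hr : r with
        | none => trivial
        | some r₀ =>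
          have hd : r₀.dom < δs := hrbound r₀ hr
          have hr₀v : Lambda.lt r₀ v := by rw [hr] at hrv; exact hrv
          refine ⟨⟨hd.le, fun β hβ => ?_⟩, fun he => ?_⟩
          · rw [hr₀v.1.2 β hβ]
            exact (Lambda.restrict_toFun v δs hδv (hβ.trans hd)).symm
          · exact absurd (congrArg Lambda.dom he) (ne_of_lt hd)
      obtain ⟨j₀, hj₀⟩ := Set.mem_iUnion.1 (hUc hpW)
      obtain ⟨b, hbB, hpb, hbU⟩ := basis.exists_subset_of_mem_open hj₀ (hUo j₀)
      obtain ⟨f, ⟨hffin, hfsub⟩, rfl⟩ := hbB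
      rcases eq_or_lt_of_le (zero_le (a := δs)) with hδ0 | hδ0
      · -- `δs = 0` : the segment consists of the single point `p`.
        apply hδsB.2
        refine ⟨{j₀}, fun q hq => ?_⟩
        have hq1 : q.1 = p1 := by
          refine Lambda.ext' (funext fun β => ?_) ?_
          · have hd : ¬ β < q.1.dom := fun hc =>
              absurd ((hc.trans_le hq.2).trans_le hδ0.ge) (not_lt_zero (a := β))
            have hd' : ¬ β < δs := fun hc => absurd (hc.trans_le hδ0.ge) (not_lt_zero (a := β))
            rw [q.1.junk β hd, p1.junk β hd']
          · have h1 : q.1.dom ≤ δs := hq.2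
            have h2 : δs ≤ q.1.dom := hδ0.ge.trans (zero_le (a := _))
            exact le_antisymm h1 h2
        have hqp : q = p := by
          refine Prod.ext hq1 ?_
          rw [hq.1.2, hq1]
        rw [hqp]
        simp only [Set.mem_iUnion]
        exact ⟨j₀, Finset.mem_singleton_self j₀, hj₀⟩
      · -- `0 < δs`
        have hkey : ∀ w ∈ f, ∃ δ₀, δ₀ < δs ∧ ∀ γ, δ₀ < γ → γ ≤ δs → ∀ (hγv : γ ≤ v.dom),
            ((v.restrict γ hγv), (-1) ^ ell (v.restrict γ hγv) v * i) ∈ w :=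
          fun w hwf => key_nbhd hδv hδ0 i (hfsub hwf) (hpb w hwf)
        obtain ⟨δ', hδ', hall⟩ := finite_combine hffin hδ0 _ hkey
        obtain ⟨F, hF⟩ := hmin δ' hδ' (hδ'.le.trans hδv)
        apply hδsB.2
        refine ⟨insert j₀ F, fun q hq => ?_⟩
        by_cases hqd : q.1.dom ≤ δ'
        · have := hF ⟨hq.1, hqd⟩
          simp only [Set.mem_iUnion] at this ⊢
          obtain ⟨j, hj1, hj2⟩ := this
          exact ⟨j, Finset.mem_insert_of_mem hj1, hj2⟩
        · push_neg at hqd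
          have hqle : q.1.le v := hq.1.1.2
          have hqδs : q.1.dom ≤ δs := hq.2
          have hq1 : q.1 = v.restrict q.1.dom hqle.1 := Lambda.eq_restrict hqle
          have hqeq : q = ((v.restrict q.1.dom hqle.1),
              (-1) ^ ell (v.restrict q.1.dom hqle.1) v * i) := by
            refine Prod.ext hq1 ?_
            rw [hq.1.2]
            exact congrArg (fun z => (-1) ^ ell z v * i) hq1
          have hqb : q ∈ Set.sInter f := by
            intro w hwf
            rw [hqeq]
            exact hall w hwf q.1.dom hqd hqδs hqle.1
          have : q ∈ U j₀ := hbU hqb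
          simp only [Set.mem_iUnion]
          exact ⟨j₀, Finset.mem_insert_self j₀ F, this⟩
    obtain ⟨F, hF⟩ := main v.dom le_rfl
    exact ⟨F, fun q hq => hF ⟨hq, hq.1.2.1⟩⟩
  refine ⟨hcompact, ?_⟩
  refine ⟨fun x n hn => ?_⟩
  obtain ⟨V, hVn, hVo, hxV⟩ := mem_nhds_iff.1 hn
  obtain ⟨b, hbB, hxb, hbV⟩ := basis.exists_subset_of_mem_open hxV hVo
  obtain ⟨f, ⟨hffin, hfsub⟩, rfl⟩ := hbB
  obtain ⟨t, i⟩ := x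
  rcases eq_or_lt_of_le (zero_le (a := t.dom)) with h0 | h0
  · -- `dom t = 0` : `W(0,t,i) = {(t,i)}`.
    have hsub : Wset none t i ⊆ Set.sInter f := by
      intro q hq
      have hq1 : q.1 = t := Lambda.eq_of_le_dom hq.1.2 (h0.ge.trans (zero_le (a := _)))
      have hqx : q = (t, i) := by
        refine Prod.ext hq1 ?_
        rw [hq.2, hq1, ell_self, pow_zero, one_mul]
      rw [hqx]
      exact hxb
    refine ⟨Wset none t i, ?_, hsub.trans (hbV.trans hVn), hcompact none t i trivial⟩
    refine (hWopen none t i trivial).mem_nhds ?_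
    exact ⟨⟨trivial, Lambda.le_refl t⟩, by rw [ell_self, pow_zero, one_mul]⟩
  · -- `0 < dom t`
    have hteq : t = t.restrict t.dom le_rfl := Lambda.eq_restrict (Lambda.le_refl t)
    have hpix : ∀ w ∈ f,
        ((t.restrict t.dom le_rfl), (-1) ^ ell (t.restrict t.dom le_rfl) t * i) ∈ w := by
      intro w hw
      have heq : ((t.restrict t.dom le_rfl), (-1) ^ ell (t.restrict t.dom le_rfl) t * i)
          = ((t, i) : Dup) := by
        rw [← hteq, ell_self, pow_zero, one_mul]
      rw [heq]
      exact hxb w hw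
    have hkey : ∀ w ∈ f, ∃ δ₀, δ₀ < t.dom ∧ ∀ γ, δ₀ < γ → γ ≤ t.dom → ∀ (hγv : γ ≤ t.dom),
        ((t.restrict γ hγv), (-1) ^ ell (t.restrict γ hγv) t * i) ∈ w :=
      fun w hw => key_nbhd le_rfl h0 i (hfsub hw) (hpix w hw)
    obtain ⟨δ', hδ', hall⟩ := finite_combine hffin h0 _ hkey
    set r' : Lambda := t.restrict δ' hδ'.le with hr'
    have hr't : Lambda.lt r' t :=
      ⟨Lambda.restrict_le t δ' hδ'.le, fun he => absurd (congrArg Lambda.dom he) (ne_of_lt hδ')⟩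
    have hsub : Wset (some r') t i ⊆ Set.sInter f := by
      intro q hq
      have hrq : Lambda.lt r' q.1 := hq.1.1
      have hqle : q.1.le t := hq.1.2
      have hd1 : δ' < q.1.dom := Lambda.lt_dom hrq
      have hd2 : q.1.dom ≤ t.dom := hqle.1
      have hq1 : q.1 = t.restrict q.1.dom hqle.1 := Lambda.eq_restrict hqle
      have hqeq : q = ((t.restrict q.1.dom hqle.1),
          (-1) ^ ell (t.restrict q.1.dom hqle.1) t * i) := by
        refine Prod.ext hq1 ?_
        rw [hq.2]
        exact congrArg (fun z => (-1) ^ ell z t * i) hq1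
      intro w hwf
      rw [hqeq]
      exact hall w hwf q.1.dom hd1 hd2 hqle.1
    refine ⟨Wset (some r') t i, ?_, hsub.trans (hbV.trans hVn), hcompact (some r') t i hr't⟩
    refine (hWopen (some r') t i hr't).mem_nhds ?_
    exact ⟨⟨hr't, Lambda.le_refl t⟩, by rw [ell_self, pow_zero, one_mul]⟩
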